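/- Let G be a torsion group with no elements of order 2. Then G ⊗ G ≅ ∇(G) × (G ∧ G); consequently J̃(G) ≅ M(G) and J(G) ≅ M(G) × ∇(G), i.e. π₂ˢ(K(G,1)) ≅ H₂(G) and π₃(SK(G,1)) ≅ H₂(G) × ∇(G). -/

import Mathlib

/- Nonabelian tensor square framework (Brown–Loday). -/

namespace NATensor

variable (G : Type*) [Group G]

/-- The relator set for the nonabelian tensor square of `G`:
`g g' ⊗ h = (ᵍg' ⊗ ᵍh)(g ⊗ h)` and `g ⊗ h h' = (g ⊗ h)(ʰg ⊗ ʰh')`. -/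
def rels : Set (FreeGroup (G × G)) :=
  {r | (∃ g g' h : G,
          r = FreeGroup.of (g * g', h) *
              (FreeGroup.of (g * g' * g⁻¹, g * h * g⁻¹) * FreeGroup.of (g, h))⁻¹) ∨
       (∃ g h h' : G,
          r = FreeGroup.of (g, h * h') *
              (FreeGroup.of (g, h) * FreeGroup.of (h * g * h⁻¹, h * h' * h⁻¹))⁻¹)}

/-- The nonabelian tensor square `G ⊗ G`. -/
abbrev TS := PresentedGroup (rels G)

variable {G}

/-- The generator `g ⊗ h` of the nonabelian tensor square. -/
def tmul (g h : G) : TS G := PresentedGroup.of (g, h)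

lemma mk_rel_eq_one {r : FreeGroup (G × G)} (hr : r ∈ rels G) :
    (PresentedGroup.mk (rels G) r : TS G) = 1 :=
  (QuotientGroup.eq_one_iff r).mpr (Subgroup.subset_normalClosure hr)

lemma tmul_rel₁ (g g' h : G) :
    tmul (g * g') h = tmul (g * g' * g⁻¹) (g * h * g⁻¹) * tmul g h := by
  have h1 := mk_rel_eq_one (G := G) (Or.inl ⟨g, g', h, rfl⟩)
  simp only [map_mul, map_inv, mul_inv_eq_one] at h1
  exact h1

lemma tmul_rel₂ (g h h' : G) :
    tmul g (h * h') = tmul g h * tmul (h * g * h⁻¹) (h * h' * h⁻¹) := by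
  have h1 := mk_rel_eq_one (G := G) (Or.inr ⟨g, h, h', rfl⟩)
  simp only [map_mul, map_inv, mul_inv_eq_one] at h1
  exact h1

variable (G)

/-- The homomorphism `κ : G ⊗ G → G`, `g ⊗ h ↦ [g,h] = g h g⁻¹ h⁻¹` (its image is `[G,G]`). -/
def kappa : TS G →* G :=
  PresentedGroup.toGroup (f := fun x : G × G => x.1 * x.2 * x.1⁻¹ * x.2⁻¹) (by
    rintro r (⟨g, g', h, rfl⟩ | ⟨g, h, h', rfl⟩) <;>
      simp only [map_mul, map_inv, FreeGroup.lift_apply_of] <;> group)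

variable {G}

@[simp] lemma kappa_tmul (g h : G) : kappa G (tmul g h) = g * h * g⁻¹ * h⁻¹ :=
  PresentedGroup.toGroup.of _

variable (G)

/-- `J(G) = ker κ ≅ π₃(SK(G,1))`. -/
def J : Subgroup (TS G) := (kappa G).ker

/-- `∇(G)`: the (normal) subgroup of `G ⊗ G` generated by the elements `x ⊗ x`. -/
def nabla : Subgroup (TS G) :=
  Subgroup.normalClosure {t | ∃ x : G, t = tmul x x}

/-- `Δ(G)`: the (normal) subgroup of `G ⊗ G` generated by the `(x ⊗ y)(y ⊗ x)`. -/
def delta : Subgroup (TS G) :=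
  Subgroup.normalClosure {t | ∃ x y : G, t = tmul x y * tmul y x}

instance : (nabla G).Normal := Subgroup.normalClosure_normal

instance : (delta G).Normal := Subgroup.normalClosure_normal

/-- The exterior square `G ∧ G = (G ⊗ G)/∇(G)`. -/
abbrev ES := TS G ⧸ nabla G

/-- The symmetric square `G ⊗̃ G = (G ⊗ G)/Δ(G)`. -/
abbrev SS := TS G ⧸ delta G

variable {G}

/-- The element `g ∧ h` of the exterior square. -/
def emul (g h : G) : ES G := QuotientGroup.mk' (nabla G) (tmul g h)

/-- The image of `g ⊗ h` in the symmetric square. -/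
def smul (g h : G) : SS G := QuotientGroup.mk' (delta G) (tmul g h)

variable {H : Type*} [Group H]

/-- The induced homomorphism `G ⊗ G → H ⊗ H` of a homomorphism `f : G → H`. -/
def tmap (f : G →* H) : TS G →* TS H :=
  PresentedGroup.toGroup (f := fun x : G × G => tmul (f x.1) (f x.2)) (by
    rintro r (⟨g, g', h, rfl⟩ | ⟨g, h, h', rfl⟩) <;>
      simp only [map_mul, map_inv, FreeGroup.lift_apply_of, mul_inv_eq_one]
    · rw [tmul_rel₁]
    · rw [tmul_rel₂])

@[simp] lemma tmap_tmul (f : G →* H) (g h : G) :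
    tmap f (tmul g h) = tmul (f g) (f h) :=
  PresentedGroup.toGroup.of _

lemma nabla_le_comap_nabla (f : G →* H) :
    nabla G ≤ MonoidHom.ker ((QuotientGroup.mk' (nabla H)).comp (tmap f)) := by
  refine Subgroup.normalClosure_le_normal ?_
  rintro _ ⟨y, rfl⟩
  simp only [SetLike.mem_coe, MonoidHom.mem_ker, MonoidHom.comp_apply, tmap_tmul,
    QuotientGroup.mk'_apply, QuotientGroup.eq_one_iff]
  exact Subgroup.subset_normalClosure ⟨f y, rfl⟩

lemma delta_le_comap_delta (f : G →* H) :
    delta G ≤ MonoidHom.ker ((QuotientGroup.mk' (delta H)).comp (tmap f)) := by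
  refine Subgroup.normalClosure_le_normal ?_
  rintro _ ⟨x, y, rfl⟩
  simp only [SetLike.mem_coe, MonoidHom.mem_ker, MonoidHom.comp_apply, map_mul, tmap_tmul,
    QuotientGroup.mk'_apply, ← QuotientGroup.mk_mul, QuotientGroup.eq_one_iff]
  exact Subgroup.subset_normalClosure ⟨f x, f y, rfl⟩

/-- The induced homomorphism `G ∧ G → H ∧ H` of a homomorphism `f : G → H`. -/
def emap (f : G →* H) : ES G →* ES H :=
  QuotientGroup.lift (nabla G) ((QuotientGroup.mk' (nabla H)).comp (tmap f))
    (fun x hx => MonoidHom.mem_ker.mp (nabla_le_comap_nabla f hx))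

@[simp] lemma emap_emul (f : G →* H) (g h : G) :
    emap f (emul g h) = emul (f g) (f h) := by
  simp [emap, emul, QuotientGroup.mk'_apply, QuotientGroup.lift_mk']
  exact congrArg (QuotientGroup.mk' (nabla H)) (tmap_tmul f g h)

/-- The induced homomorphism `G ⊗̃ G → H ⊗̃ H` of a homomorphism `f : G → H`. -/
def smap (f : G →* H) : SS G →* SS H :=
  QuotientGroup.lift (delta G) ((QuotientGroup.mk' (delta H)).comp (tmap f))
    (fun x hx => MonoidHom.mem_ker.mp (delta_le_comap_delta f hx))

variable (G)

lemma nabla_le_ker_kappa : nabla G ≤ (kappa G).ker := by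
  refine Subgroup.normalClosure_le_normal ?_
  rintro _ ⟨x, rfl⟩
  simp only [SetLike.mem_coe, MonoidHom.mem_ker, kappa_tmul]
  group

/-- The homomorphism `κ' : G ∧ G → G`, `g ∧ h ↦ [g,h]` (its image is `[G,G]`). -/
def kappa' : ES G →* G :=
  QuotientGroup.lift (nabla G) (kappa G)
    (fun x hx => MonoidHom.mem_ker.mp (nabla_le_ker_kappa G hx))

/-- The Schur multiplier `M(G) = ker κ' ≅ H₂(G)`. -/
def M : Subgroup (ES G) := (kappa' G).ker

/-- `J̃(G) = J(G)/Δ(G) ≅ π₂ˢ(K(G,1))`, realized as the image of `J(G)` in `G ⊗̃ G`. -/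
def Jt : Subgroup (SS G) := Subgroup.map (QuotientGroup.mk' (delta G)) (J G)

/-- `∇(G)/Δ(G)`, realized as the image of `∇(G)` in `G ⊗̃ G`. -/
def nablaBar : Subgroup (SS G) := Subgroup.map (QuotientGroup.mk' (delta G)) (nabla G)

end NATensor

namespace NATensor

variable {G : Type*} [Group G]

lemma tmul_congr {a a' b b' : G} (h1 : a = a') (h2 : b = b') :
    (tmul a b : TS G) = tmul a' b' := by rw [h1, h2]

@[simp] lemma tmul_one' (g : G) : (tmul g 1 : TS G) = 1 := by
  have h := tmul_rel₂ g (1 : G) 1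
  simp only [mul_one, one_mul, inv_one] at h
  exact left_eq_mul.mp h

@[simp] lemma one_tmul' (h : G) : (tmul 1 h : TS G) = 1 := by
  have h1 := tmul_rel₁ (1 : G) 1 h
  simp only [mul_one, one_mul, inv_one] at h1
  exact left_eq_mul.mp h1

/-- The two expansions of `(g g') ⊗ (h h')` give the key swapping identity. -/
lemma key_swap (g h g' h' : G) :
    (tmul (g*h*g'*(g*h)⁻¹) (g*h*h'*(g*h)⁻¹) : TS G) * tmul g h
      = tmul g h * tmul (h*g*g'*(h*g)⁻¹) (h*g*h'*(h*g)⁻¹) := by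
  have e1 : (tmul (g*g') (h*h') : TS G) =
      tmul (g*g'*g⁻¹) (g*h*g⁻¹) *
        (tmul (g*h*g'*(g*h)⁻¹) (g*h*h'*(g*h)⁻¹) * tmul g h * tmul (h*g*h⁻¹) (h*h'*h⁻¹)) := by
    rw [tmul_rel₁ g g' (h*h'), tmul_rel₂ g h h',
      show (tmul (g*g'*g⁻¹) (g*(h*h')*g⁻¹) : TS G)
          = tmul (g*g'*g⁻¹) ((g*h*g⁻¹)*(g*h'*g⁻¹)) from tmul_congr rfl (by group),
      tmul_rel₂ (g*g'*g⁻¹) (g*h*g⁻¹) (g*h'*g⁻¹),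
      show (tmul ((g*h*g⁻¹)*(g*g'*g⁻¹)*(g*h*g⁻¹)⁻¹) ((g*h*g⁻¹)*(g*h'*g⁻¹)*(g*h*g⁻¹)⁻¹) : TS G)
          = tmul (g*h*g'*(g*h)⁻¹) (g*h*h'*(g*h)⁻¹) from tmul_congr (by group) (by group)]
    simp only [mul_assoc]
  have e2 : (tmul (g*g') (h*h') : TS G) =
      tmul (g*g'*g⁻¹) (g*h*g⁻¹) *
        (tmul g h * tmul (h*g*g'*(h*g)⁻¹) (h*g*h'*(h*g)⁻¹) * tmul (h*g*h⁻¹) (h*h'*h⁻¹)) := by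
    rw [tmul_rel₂ (g*g') h h', tmul_rel₁ g g' h,
      show (tmul (h*(g*g')*h⁻¹) (h*h'*h⁻¹) : TS G)
          = tmul ((h*g*h⁻¹)*(h*g'*h⁻¹)) (h*h'*h⁻¹) from tmul_congr (by group) rfl,
      tmul_rel₁ (h*g*h⁻¹) (h*g'*h⁻¹) (h*h'*h⁻¹),
      show (tmul ((h*g*h⁻¹)*(h*g'*h⁻¹)*(h*g*h⁻¹)⁻¹) ((h*g*h⁻¹)*(h*h'*h⁻¹)*(h*g*h⁻¹)⁻¹) : TS G)
          = tmul (h*g*g'*(h*g)⁻¹) (h*g*h'*(h*g)⁻¹) from tmul_congr (by group) (by group)]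
    simp only [mul_assoc]
  have e3 := mul_left_cancel (e1.symm.trans e2)
  exact mul_right_cancel e3

/-- Conjugation by `g ⊗ h` is conjugation of the entries by `[g,h]`. -/
lemma conj_tmul (g h a b : G) :
    (tmul g h : TS G) * tmul a b
      = tmul ((g*h*g⁻¹*h⁻¹)*a*(g*h*g⁻¹*h⁻¹)⁻¹) ((g*h*g⁻¹*h⁻¹)*b*(g*h*g⁻¹*h⁻¹)⁻¹) * tmul g h := by
  have k := key_swap g h ((h*g)⁻¹*a*(h*g)) ((h*g)⁻¹*b*(h*g))
  rw [show (tmul (h*g*((h*g)⁻¹*a*(h*g))*(h*g)⁻¹) (h*g*((h*g)⁻¹*b*(h*g))*(h*g)⁻¹) : TS G)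
        = tmul a b from tmul_congr (by group) (by group),
    show (tmul (g*h*((h*g)⁻¹*a*(h*g))*(g*h)⁻¹) (g*h*((h*g)⁻¹*b*(h*g))*(g*h)⁻¹) : TS G)
        = tmul ((g*h*g⁻¹*h⁻¹)*a*(g*h*g⁻¹*h⁻¹)⁻¹) ((g*h*g⁻¹*h⁻¹)*b*(g*h*g⁻¹*h⁻¹)⁻¹) from
      tmul_congr (by group) (by group)] at k
  exact k.symm

lemma diag_comm_tmul (x a b : G) : Commute (tmul x x : TS G) (tmul a b) := by
  have h := conj_tmul x x a b
  rw [show (tmul ((x*x*x⁻¹*x⁻¹)*a*(x*x*x⁻¹*x⁻¹)⁻¹) ((x*x*x⁻¹*x⁻¹)*b*(x*x*x⁻¹*x⁻¹)⁻¹) : TS G)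
      = tmul a b from tmul_congr (by group) (by group)] at h
  exact h

lemma sym_comm_tmul (x y a b : G) :
    Commute ((tmul x y : TS G) * tmul y x) (tmul a b) := by
  show _ * _ = _ * _
  rw [mul_assoc, conj_tmul y x a b, ← mul_assoc, conj_tmul x y]
  rw [show (tmul ((x*y*x⁻¹*y⁻¹)*((y*x*y⁻¹*x⁻¹)*a*(y*x*y⁻¹*x⁻¹)⁻¹)*(x*y*x⁻¹*y⁻¹)⁻¹)
        ((x*y*x⁻¹*y⁻¹)*((y*x*y⁻¹*x⁻¹)*b*(y*x*y⁻¹*x⁻¹)⁻¹)*(x*y*x⁻¹*y⁻¹)⁻¹) : TS G)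
      = tmul a b from tmul_congr (by group) (by group)]
  simp only [mul_assoc]

/-- Induction principle for the tensor square. -/
lemma TS.induction_on {P : TS G → Prop} (t : TS G) (h1 : P 1)
    (hof : ∀ a b : G, P (tmul a b)) (hinv : ∀ a b : G, P (tmul a b)⁻¹)
    (hmul : ∀ s t, P s → P t → P (s * t)) : P t := by
  obtain ⟨w, rfl⟩ := PresentedGroup.mk_surjective (rels G) t
  induction w using FreeGroup.induction_on with
  | C1 => simpa using h1
  | of x => exact hof x.1 x.2
  | inv_of x _ => rw [map_inv]; exact hinv x.1 x.2
  | mul x y hx hy => rw [map_mul]; exact hmul _ _ hx hy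

lemma commute_all {z : TS G} (hz : ∀ a b : G, Commute z (tmul a b)) (t : TS G) :
    Commute z t :=
  TS.induction_on t (Commute.one_right z) hz (fun a b => (hz a b).inv_right)
    (fun _ _ hs ht => hs.mul_right ht)

lemma diag_mem_center (x : G) : (tmul x x : TS G) ∈ Subgroup.center (TS G) := by
  rw [Subgroup.mem_center_iff]
  exact fun t => (commute_all (diag_comm_tmul x) t).symm

lemma sym_mem_center (x y : G) :
    (tmul x y : TS G) * tmul y x ∈ Subgroup.center (TS G) := by
  rw [Subgroup.mem_center_iff]
  exact fun t => (commute_all (sym_comm_tmul x y) t).symm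

lemma nabla_le_center : nabla G ≤ Subgroup.center (TS G) :=
  Subgroup.normalClosure_le_normal (by rintro _ ⟨x, rfl⟩; exact diag_mem_center x)

lemma nabla_eq_closure :
    nabla G = Subgroup.closure {t : TS G | ∃ x : G, t = tmul x x} := by
  haveI hnorm : (Subgroup.closure {t : TS G | ∃ x : G, t = tmul x x}).Normal := by
    constructor
    intro n hn g
    have hc : n ∈ Subgroup.center (TS G) :=
      (Subgroup.closure_le _).mpr (by rintro _ ⟨x, rfl⟩; exact diag_mem_center x) hn
    rw [Subgroup.mem_center_iff.mp hc g, mul_inv_cancel_right]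
    exact hn
  exact le_antisymm (Subgroup.normalClosure_le_normal Subgroup.subset_closure)
    ((Subgroup.closure_le _).mpr Subgroup.subset_normalClosure)

/-- `(a ⊗ b)(b ⊗ a)` lies in `∇(G)`. -/
lemma sym_mem_nabla (a b : G) : (tmul a b : TS G) * tmul b a ∈ nabla G := by
  -- expand `tmul (a*b) (a*b)` with `g := b`, `h := b⁻¹*a*b`.
  set g : G := b with hg
  set h : G := b⁻¹*a*b with hh
  have e : (tmul (g*h) (g*h) : TS G)
      = tmul (g*h*g⁻¹) g * (tmul g g * tmul (g*(g*h*g⁻¹)*g⁻¹) (g*(g*h*g⁻¹)*g⁻¹))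
          * tmul g (g*h*g⁻¹) := by
    rw [tmul_rel₂ (g*h) g h, tmul_rel₁ g h g,
      show (tmul (g*h*g⁻¹) (g*g*g⁻¹) : TS G) = tmul (g*h*g⁻¹) g from tmul_congr rfl (by group),
      show (tmul (g*(g*h)*g⁻¹) (g*h*g⁻¹) : TS G)
          = tmul (g*(g*h*g⁻¹)) (g*h*g⁻¹) from tmul_congr (by group) rfl,
      tmul_rel₁ g (g*h*g⁻¹) (g*h*g⁻¹)]
    simp only [mul_assoc]
  have hac : g*h*g⁻¹ = a := by rw [hg, hh]; group
  rw [hac] at e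
  have e' : (tmul (g*h) (g*h) : TS G)
      = tmul g g * tmul (g*a*g⁻¹) (g*a*g⁻¹) * (tmul a g * tmul g a) := by
    have hcen := Subgroup.mem_center_iff.mp
      (Subgroup.mul_mem _ (diag_mem_center g) (diag_mem_center (g*a*g⁻¹))) (tmul a g)
    rw [e]
    simp only [← mul_assoc] at hcen ⊢
    rw [hcen]
  have : (tmul a g : TS G) * tmul g a
      = (tmul g g * tmul (g*a*g⁻¹) (g*a*g⁻¹))⁻¹ * tmul (g*h) (g*h) := by
    rw [e']; group
  rw [hg] at this
  rw [this]
  refine Subgroup.mul_mem _ (Subgroup.inv_mem _ (Subgroup.mul_mem _ ?_ ?_)) ?_ <;>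
    exact Subgroup.subset_normalClosure ⟨_, rfl⟩

lemma tmul_pow (x : G) (n : ℕ) : (tmul x (x^n) : TS G) = (tmul x x)^n := by
  induction n with
  | zero => simp
  | succ n ih =>
    have h := tmul_rel₂ x (x^n) x
    rw [show (x^n*x*(x^n)⁻¹ : G) = x from by
        rw [← pow_succ, pow_succ', mul_inv_cancel_right]] at h
    rw [pow_succ x n, h, ih, pow_succ]

private lemma grp_aux1 {M : Type*} [Group M] (A b c d : M) (h : (b*c)*d = d*(b*c)) :
    (A*b)*(c*d) = (A*d)*(b*c) := by
  have e : (A*b)*(c*d) = A*((b*c)*d) := by simp only [mul_assoc]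
  rw [e, h]; simp only [mul_assoc]

private lemma grp_aux2 {M : Type*} [Group M] (b c u v : M) (h : (u*v)*c = c*(u*v)) :
    (b*u)*(v*c) = (b*c)*(u*v) := by
  have e : (b*u)*(v*c) = b*((u*v)*c) := by simp only [mul_assoc]
  rw [e, h]; simp only [mul_assoc]

variable (G) in
/-- The homomorphism `q : G ⊗ G → G ⊗ G`, `g ⊗ h ↦ (g ⊗ h)(h ⊗ g)`. -/
def qmap : TS G →* TS G :=
  PresentedGroup.toGroup (f := fun x : G × G => tmul x.1 x.2 * tmul x.2 x.1) (by
    rintro r (⟨g, g', h, rfl⟩ | ⟨g, h, h', rfl⟩) <;>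
      simp only [map_mul, map_inv, FreeGroup.lift_apply_of, mul_inv_eq_one]
    · rw [tmul_rel₁ g g' h, tmul_rel₂ h g g']
      exact grp_aux1 _ _ _ _ (commute_all (sym_comm_tmul g h) _).eq
    · rw [tmul_rel₂ g h h', tmul_rel₁ h h' g]
      exact grp_aux2 _ _ _ _ (commute_all (sym_comm_tmul (h*g*h⁻¹) (h*h'*h⁻¹)) _).eq)

@[simp] lemma qmap_tmul (g h : G) :
    qmap G (tmul g h) = tmul g h * tmul h g :=
  PresentedGroup.toGroup.of _

lemma qmap_mem_nabla (t : TS G) : qmap G t ∈ nabla G := by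
  refine TS.induction_on (P := fun t => qmap G t ∈ nabla G) t
    (by simp only [map_one]; exact one_mem _)
    (fun a b => by show qmap G (tmul a b) ∈ nabla G; rw [qmap_tmul]; exact sym_mem_nabla a b)
    (fun a b => by
      show qmap G (tmul a b)⁻¹ ∈ nabla G
      rw [map_inv]; exact inv_mem (by rw [qmap_tmul]; exact sym_mem_nabla a b))
    (fun s t hs ht => by show qmap G (s * t) ∈ nabla G; rw [map_mul]; exact mul_mem hs ht)

lemma orderOf_odd (htor : ∀ g : G, IsOfFinOrder g) (h2 : ∀ g : G, g ^ 2 = 1 → g = 1)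
    (x : G) : Odd (orderOf x) := by
  rcases Nat.even_or_odd (orderOf x) with he | ho
  · obtain ⟨m, hm⟩ := he
    have hpos : 0 < orderOf x := (htor x).orderOf_pos
    have hx2 : (x ^ m) ^ 2 = 1 := by
      rw [← pow_mul, show m * 2 = m + m by ring, ← hm, pow_orderOf_eq_one]
    have hxm : x ^ m = 1 := h2 _ hx2
    have hdvd := orderOf_dvd_of_pow_eq_one hxm
    have hm0 : m ≠ 0 := by rintro rfl; omega
    have := Nat.le_of_dvd (Nat.pos_of_ne_zero hm0) hdvd
    omega
  · exact ho

/-- Every element of `∇(G)` is central of odd finite order (given the hypotheses on `G`). -/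
lemma nabla_odd (htor : ∀ g : G, IsOfFinOrder g) (h2 : ∀ g : G, g ^ 2 = 1 → g = 1)
    {t : TS G} (ht : t ∈ nabla G) : ∃ n : ℕ, Odd n ∧ t ^ n = 1 := by
  have odd_ord : ∀ x : G, Odd (orderOf x) := orderOf_odd htor h2
  rw [nabla_eq_closure] at ht
  induction ht using Subgroup.closure_induction with
  | mem z hz =>
    obtain ⟨x, rfl⟩ := hz
    exact ⟨orderOf x, odd_ord x, by
      rw [← tmul_pow, pow_orderOf_eq_one, tmul_one']⟩
  | one => exact ⟨1, odd_one, one_pow 1⟩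
  | mul a b ha hb iha ihb =>
    obtain ⟨n, hn, han⟩ := iha
    obtain ⟨m, hm, hbm⟩ := ihb
    have hcomm : Commute a b := by
      have := Subgroup.mem_center_iff.mp (nabla_le_center (nabla_eq_closure (G := G) ▸ ha)) b
      exact this.symm
    exact ⟨n * m, hn.mul hm, by
      rw [hcomm.mul_pow, pow_mul, han, one_pow, one_mul, mul_comm n m, pow_mul, hbm, one_pow]⟩
  | inv a ha iha =>
    obtain ⟨n, hn, han⟩ := iha
    exact ⟨n, hn, by rw [inv_pow, han, inv_one]⟩

variable (G) in
/-- Squaring on `∇(G)`, as a homomorphism. -/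
def sqHom : ↥(nabla G) →* ↥(nabla G) where
  toFun a := a ^ 2
  map_one' := one_pow 2
  map_mul' a b := by
    have hcomm : Commute (a : TS G) (b : TS G) :=
      (Subgroup.mem_center_iff.mp (nabla_le_center a.2) b).symm
    ext
    push_cast
    exact hcomm.mul_pow 2

lemma sqHom_bijective (htor : ∀ g : G, IsOfFinOrder g) (h2 : ∀ g : G, g ^ 2 = 1 → g = 1) :
    Function.Bijective (sqHom G) := by
  constructor
  · intro a b hab
    obtain ⟨n, hn, han⟩ := nabla_odd htor h2 (a * b⁻¹ : ↥(nabla G)).2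
    obtain ⟨k, hk⟩ := hn
    have hcomm : Commute (a : TS G) ((b : TS G)⁻¹) :=
      ((Subgroup.mem_center_iff.mp (nabla_le_center a.2) b⁻¹)).symm
    have hsq : ((a * b⁻¹ : ↥(nabla G)) : TS G) ^ 2 = 1 := by
      push_cast
      rw [hcomm.mul_pow 2]
      have : (a : TS G) ^ 2 = (b : TS G) ^ 2 := by
        have := congrArg (Subtype.val) hab
        simpa [sqHom] using this
      rw [this, inv_pow, mul_inv_cancel]
    have h1 : ((a * b⁻¹ : ↥(nabla G)) : TS G) = 1 := by
      have : ((a * b⁻¹ : ↥(nabla G)) : TS G) ^ (n + 1) = ((a * b⁻¹ : ↥(nabla G)) : TS G) := by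
        rw [pow_succ, han, one_mul]
      rw [← this, hk, show 2 * k + 1 + 1 = 2 * (k + 1) by ring, pow_mul, hsq, one_pow]
    have : (a * b⁻¹ : ↥(nabla G)) = 1 := Subtype.ext h1
    exact mul_inv_eq_one.mp this
  · intro b
    obtain ⟨n, hn, hbn⟩ := nabla_odd htor h2 b.2
    obtain ⟨k, hk⟩ := hn
    refine ⟨b ^ (k + 1), ?_⟩
    have : (b : TS G) ^ n = 1 := by
      have := congrArg (Subtype.val) (?_ : (b : ↥(nabla G)) ^ n = b ^ n)
      · exact (by push_cast at this ⊢; exact hbn)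
      · rfl
    ext
    show ((b ^ (k + 1) : ↥(nabla G)) : TS G) ^ 2 = b
    push_cast
    rw [← pow_mul, show (k + 1) * 2 = n + 1 by omega, pow_succ, this, one_mul]

variable (G) in
noncomputable def sqEquiv (htor : ∀ g : G, IsOfFinOrder g) (h2 : ∀ g : G, g ^ 2 = 1 → g = 1) :
    ↥(nabla G) ≃* ↥(nabla G) :=
  MulEquiv.ofBijective (sqHom G) (sqHom_bijective htor h2)

variable (G) in
/-- The retraction `r : G ⊗ G → ∇(G)`. -/
noncomputable def rmap (htor : ∀ g : G, IsOfFinOrder g) (h2 : ∀ g : G, g ^ 2 = 1 → g = 1) :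
    TS G →* ↥(nabla G) :=
  (sqEquiv G htor h2).symm.toMonoidHom.comp ((qmap G).codRestrict (nabla G) qmap_mem_nabla)

section rmap
variable (htor : ∀ g : G, IsOfFinOrder g) (h2 : ∀ g : G, g ^ 2 = 1 → g = 1)

lemma rmap_diag (x : G) :
    rmap G htor h2 (tmul x x) = ⟨tmul x x, Subgroup.subset_normalClosure ⟨x, rfl⟩⟩ := by
  rw [rmap, MonoidHom.comp_apply]
  refine (MulEquiv.symm_apply_eq _).mpr ?_
  ext
  show qmap G (tmul x x) = ((tmul x x : TS G)) ^ 2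
  rw [qmap_tmul, sq]

lemma rmap_of_mem {t : TS G} (ht : t ∈ nabla G) :
    ((rmap G htor h2 t : ↥(nabla G)) : TS G) = t := by
  rw [nabla_eq_closure] at ht
  induction ht using Subgroup.closure_induction with
  | mem z hz =>
    obtain ⟨x, rfl⟩ := hz
    rw [rmap_diag]
  | one => rw [map_one]; rfl
  | mul a b _ _ iha ihb => rw [map_mul]; push_cast; rw [iha, ihb]
  | inv a _ iha => rw [map_inv]; push_cast; rw [iha]

end rmap

section main
variable (htor : ∀ g : G, IsOfFinOrder g) (h2 : ∀ g : G, g ^ 2 = 1 → g = 1)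

variable (G) in
noncomputable def prHom : TS G →* ↥(nabla G) × ES G :=
  (rmap G htor h2).prod (QuotientGroup.mk' (nabla G))

lemma prHom_bijective : Function.Bijective (prHom G htor h2) := by
  constructor
  · refine (injective_iff_map_eq_one _).mpr fun t ht => ?_
    have h1 : rmap G htor h2 t = 1 := congrArg Prod.fst ht
    have hq : (QuotientGroup.mk' (nabla G)) t = 1 := congrArg Prod.snd ht
    have htm : t ∈ nabla G := (QuotientGroup.eq_one_iff t).mp hq
    have hco := rmap_of_mem htor h2 htm
    rw [h1] at hco
    simpa using hco.symm
  · rintro ⟨n, e⟩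
    obtain ⟨t, rfl⟩ := QuotientGroup.mk'_surjective (nabla G) e
    refine ⟨(n : TS G) * ((rmap G htor h2 t : ↥(nabla G)) : TS G)⁻¹ * t, ?_⟩
    have hn1 : rmap G htor h2 ((n : TS G)) = n := Subtype.ext (rmap_of_mem htor h2 n.2)
    have hr1 : rmap G htor h2 (((rmap G htor h2 t : ↥(nabla G)) : TS G)) = rmap G htor h2 t :=
      Subtype.ext (rmap_of_mem htor h2 (rmap G htor h2 t).2)
    have hfst : rmap G htor h2 ((n : TS G) * ((rmap G htor h2 t : ↥(nabla G)) : TS G)⁻¹ * t)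
        = n := by
      rw [map_mul, map_mul, map_inv, hn1, hr1]
      group
    have hsnd : (QuotientGroup.mk' (nabla G))
        ((n : TS G) * ((rmap G htor h2 t : ↥(nabla G)) : TS G)⁻¹ * t)
        = QuotientGroup.mk' (nabla G) t := by
      simp only [map_mul, map_inv, QuotientGroup.mk'_apply]
      rw [(QuotientGroup.eq_one_iff _).mpr n.2,
        (QuotientGroup.eq_one_iff _).mpr (rmap G htor h2 t).2]
      group
    exact Prod.ext hfst hsnd

variable (G) in
/-- The isomorphism `G ⊗ G ≅ ∇(G) × (G ∧ G)`. -/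
noncomputable def mainEquiv : TS G ≃* ↥(nabla G) × ES G :=
  MulEquiv.ofBijective (prHom G htor h2) (prHom_bijective htor h2)

include htor h2 in
lemma delta_eq_nabla : delta G = nabla G := by
  refine le_antisymm (Subgroup.normalClosure_le_normal ?_)
    (Subgroup.normalClosure_le_normal ?_)
  · rintro _ ⟨x, y, rfl⟩
    exact sym_mem_nabla x y
  · rintro _ ⟨x, rfl⟩
    have hsq : (tmul x x : TS G) * tmul x x ∈ delta G :=
      Subgroup.subset_normalClosure ⟨x, x, rfl⟩
    obtain ⟨k, hk⟩ := orderOf_odd htor h2 x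
    have h1 : (tmul x x : TS G) ^ orderOf x = 1 := by
      rw [← tmul_pow, pow_orderOf_eq_one, tmul_one']
    have h3 : (tmul x x : TS G) = ((tmul x x : TS G) * tmul x x) ^ (k + 1) := by
      rw [← sq, ← pow_mul, show 2 * (k + 1) = orderOf x + 1 by omega, pow_succ, h1, one_mul]
    rw [SetLike.mem_coe, h3]
    exact pow_mem hsq (k + 1)

lemma kappa'_mk (t : TS G) : kappa' G (QuotientGroup.mk' (nabla G) t) = kappa G t := rfl

lemma kappa_eq_comp : kappa G = (kappa' G).comp (QuotientGroup.mk' (nabla G)) :=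
  MonoidHom.ext fun t => (kappa'_mk t).symm

lemma map_J_eq_M : Subgroup.map (QuotientGroup.mk' (nabla G)) (J G) = M G := by
  have hJ : J G = Subgroup.comap (QuotientGroup.mk' (nabla G)) (M G) := by
    show (kappa G).ker = Subgroup.comap _ (kappa' G).ker
    rw [kappa_eq_comp]
    exact (MonoidHom.comap_ker _ _).symm
  rw [hJ, Subgroup.map_comap_eq_self_of_surjective (QuotientGroup.mk'_surjective _)]

variable (G) in
noncomputable def ssEquiv : SS G ≃* ES G :=
  QuotientGroup.quotientMulEquivOfEq (delta_eq_nabla htor h2)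

lemma map_Jt_eq_M :
    Subgroup.map ((ssEquiv G htor h2 : SS G ≃* ES G) : SS G →* ES G) (Jt G) = M G := by
  have h1 : Jt G = Subgroup.map (QuotientGroup.mk' (delta G)) (J G) := rfl
  rw [h1, Subgroup.map_map]
  have h2' : ((ssEquiv G htor h2 : SS G ≃* ES G) : SS G →* ES G).comp
      (QuotientGroup.mk' (delta G)) = QuotientGroup.mk' (nabla G) :=
    MonoidHom.ext fun x => QuotientGroup.quotientMulEquivOfEq_mk (delta_eq_nabla htor h2) x
  rw [h2', map_J_eq_M]

variable (G) in
/-- The isomorphism `J̃(G) ≅ M(G)`. -/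
noncomputable def JtEquivM : ↥(Jt G) ≃* ↥(M G) :=
  ((ssEquiv G htor h2).subgroupMap (Jt G)).trans
    (MulEquiv.subgroupCongr (map_Jt_eq_M htor h2))

lemma mk_mem_M (t : ↥(J G)) : QuotientGroup.mk' (nabla G) (t : TS G) ∈ M G := by
  show kappa' G _ = 1
  rw [kappa'_mk]
  exact t.2

variable (G) in
noncomputable def JHom : ↥(J G) →* ↥(M G) × ↥(nabla G) :=
  (((QuotientGroup.mk' (nabla G)).comp (J G).subtype).codRestrict (M G)
      (fun t => mk_mem_M t)).prod
    ((rmap G htor h2).comp (J G).subtype)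

lemma JHom_bijective : Function.Bijective (JHom G htor h2) := by
  constructor
  · refine (injective_iff_map_eq_one _).mpr fun t ht => ?_
    have h1 : rmap G htor h2 (t : TS G) = 1 := congrArg Prod.snd ht
    have hq : (QuotientGroup.mk' (nabla G)) (t : TS G) = 1 :=
      congrArg Subtype.val (congrArg Prod.fst ht)
    have htm : (t : TS G) ∈ nabla G := (QuotientGroup.eq_one_iff _).mp hq
    have hco := rmap_of_mem htor h2 htm
    rw [h1] at hco
    exact Subtype.ext (by simpa using hco.symm)
  · rintro ⟨m, n⟩
    obtain ⟨t, htm⟩ := QuotientGroup.mk'_surjective (nabla G) (m : ES G)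
    have hkt : kappa G t = 1 := by
      have : kappa' G (QuotientGroup.mk' (nabla G) t) = 1 := by rw [htm]; exact m.2
      rwa [kappa'_mk] at this
    set s : TS G := (n : TS G) * ((rmap G htor h2 t : ↥(nabla G)) : TS G)⁻¹ * t with hs
    have hsJ : s ∈ J G := by
      show kappa G s = 1
      rw [hs, map_mul, map_mul, map_inv, hkt,
        nabla_le_ker_kappa G n.2, nabla_le_ker_kappa G (rmap G htor h2 t).2]
      group
    refine ⟨⟨s, hsJ⟩, ?_⟩
    have hn1 : rmap G htor h2 ((n : TS G)) = n := Subtype.ext (rmap_of_mem htor h2 n.2)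
    have hr1 : rmap G htor h2 (((rmap G htor h2 t : ↥(nabla G)) : TS G)) = rmap G htor h2 t :=
      Subtype.ext (rmap_of_mem htor h2 (rmap G htor h2 t).2)
    refine Prod.ext (Subtype.ext ?_) ?_
    · show (QuotientGroup.mk' (nabla G)) s = (m : ES G)
      rw [← htm, hs]
      simp only [map_mul, map_inv, QuotientGroup.mk'_apply]
      rw [(QuotientGroup.eq_one_iff _).mpr n.2,
        (QuotientGroup.eq_one_iff _).mpr (rmap G htor h2 t).2]
      group
    · show rmap G htor h2 s = n
      rw [hs, map_mul, map_mul, map_inv, hn1, hr1]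
      group

variable (G) in
/-- The isomorphism `J(G) ≅ M(G) × ∇(G)`. -/
noncomputable def JEquiv : ↥(J G) ≃* ↥(M G) × ↥(nabla G) :=
  MulEquiv.ofBijective (JHom G htor h2) (JHom_bijective htor h2)

end main

end NATensor


open NATensor in
/-- for a torsion group `G` with no elements of order 2,
`G ⊗ G ≅ ∇(G) × (G ∧ G)`; consequently `J̃(G) ≅ M(G)` and `J(G) ≅ M(G) × ∇(G)`, i.e.
`π₂ˢ(K(G,1)) ≅ H₂(G)` and `π₃(SK(G,1)) ≅ H₂(G) × ∇(G)`. -/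
theorem tensor_square_of_torsion_no_two_torsion (G : Type*) [Group G]
    (htor : ∀ g : G, IsOfFinOrder g) (h2 : ∀ g : G, g ^ 2 = 1 → g = 1) :
    Nonempty (TS G ≃* ↥(nabla G) × ES G) ∧
    Nonempty (↥(Jt G) ≃* ↥(M G)) ∧
    Nonempty (↥(J G) ≃* ↥(M G) × ↥(nabla G)) :=
  ⟨⟨mainEquiv G htor h2⟩, ⟨JtEquivM G htor h2⟩, ⟨JEquiv G htor h2⟩⟩
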